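/- Fix positive integers T, n_a, n_b, reals ε_u ≥ 0, ε_y ≥ 0, vectors a ∈ ℝ^{n_a}, b ∈ ℝ^{n_b}, h ∈ ℝ^T, and a real number q. Then exactly one of the following two statements holds: (I) q ≤ 0 and there exists a feasible noise pair (Δu, Δy); (II) there exist ψ⁺, ψ⁻ : {−n_b+1,…,T−1} → [0,∞), ζ⁺, ζ⁻ : {−n_a+1,…,T} → [0,∞), and μ ∈ ℝ^T (extended by zero outside {1,…,T}) such that ψ⁺_s − ψ⁻_s = Σ_{i=1}^{n_b} b_i μ_{s+i} for all s ∈ {−n_b+1,…,T−1}, ζ⁺_s − ζ⁻_s = −( μ_s + Σ_{i=1}^{n_a} a_i μ_{s+i} ) for all s ∈ {−n_a+1,…,T}, and −q + Σ_{t=1}^T h_t μ_t + ε_u Σ_s (ψ⁺_s + ψ⁻_s) + ε_y Σ_s (ζ⁺_s + ζ⁻_s) < 0. (Pointwise strong-alternative content of Theorem 3, since the eliminated constraints are affine in the noise variables.) -/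

import Mathlib

set_option linter.unusedVariables false


private lemma sum_shift (l r i : ℤ) (g : ℤ → ℝ) :
    ∑ t ∈ Finset.Icc l r, g (t - i) = ∑ s ∈ Finset.Icc (l - i) (r - i), g s := by
  rw [show Finset.Icc l r = (Finset.Icc (l - i) (r - i)).map (addRightEmbedding i) by
        rw [Finset.map_add_right_Icc]; congr 1 <;> ring,
      Finset.sum_map]
  refine Finset.sum_congr rfl fun s _ => ?_
  show g (s + i - i) = g s
  rw [add_sub_cancel_right]

private lemma inner_shift (T i : ℤ) (L R : ℤ)
    (hL : L ≤ -i) (hR : T - i - 1 ≤ R) (μ f : ℤ → ℝ)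
    (hμ : ∀ t : ℤ, t ∉ Finset.Icc 1 T → μ t = 0) :
    ∑ t ∈ Finset.Icc 1 T, μ t * f (t - (i + 1)) =
      ∑ s ∈ Finset.Icc L R, μ (s + (i + 1)) * f s := by
  have h1 := sum_shift 1 T (i + 1) (fun s => μ (s + (i + 1)) * f s)
  simp only [sub_add_cancel] at h1
  rw [h1]
  apply Finset.sum_subset
  · apply Finset.Icc_subset_Icc <;> omega
  · intro s hs hns
    rw [hμ (s + (i + 1)) (by simp only [Finset.mem_Icc] at *; omega), zero_mul]

private lemma expand_sum (T na nb : ℕ)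
    (a : Fin na → ℝ) (b : Fin nb → ℝ) (h : ℤ → ℝ) (Δu Δy μ : ℤ → ℝ)
    (hμ : ∀ t : ℤ, t ∉ Finset.Icc (1:ℤ) (T:ℤ) → μ t = 0) :
    ∑ t ∈ Finset.Icc (1:ℤ) (T:ℤ), μ t *
        (h t - (∑ i : Fin na, a i * Δy (t - (i.val + 1 : ℤ)))
          + (∑ i : Fin nb, b i * Δu (t - (i.val + 1 : ℤ))) - Δy t)
      = (∑ t ∈ Finset.Icc (1:ℤ) (T:ℤ), μ t * h t)
        + (∑ s ∈ Finset.Icc (-(nb:ℤ)+1) ((T:ℤ)-1),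
            Δu s * (∑ i : Fin nb, b i * μ (s + (i.val + 1 : ℤ))))
        - (∑ s ∈ Finset.Icc (-(na:ℤ)+1) (T:ℤ),
            Δy s * (μ s + ∑ i : Fin na, a i * μ (s + (i.val + 1 : ℤ)))) := by
  classical
  have hyshift : ∀ i : Fin na, ∑ t ∈ Finset.Icc (1:ℤ) (T:ℤ), μ t * Δy (t - ((i.val:ℤ) + 1)) =
      ∑ s ∈ Finset.Icc (-(na:ℤ)+1) (T:ℤ), μ (s + ((i.val:ℤ) + 1)) * Δy s := by
    intro i
    exact inner_shift T (i.val:ℤ) (-(na:ℤ)+1) (T:ℤ) (by have := i.isLt; omega) (by have := i.isLt; omega) μ Δy hμ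
  have hushift : ∀ i : Fin nb, ∑ t ∈ Finset.Icc (1:ℤ) (T:ℤ), μ t * Δu (t - ((i.val:ℤ) + 1)) =
      ∑ s ∈ Finset.Icc (-(nb:ℤ)+1) ((T:ℤ)-1), μ (s + ((i.val:ℤ) + 1)) * Δu s := by
    intro i
    exact inner_shift T (i.val:ℤ) (-(nb:ℤ)+1) ((T:ℤ)-1) (by have := i.isLt; omega) (by have := i.isLt; omega) μ Δu hμ
  have hy0 : ∑ t ∈ Finset.Icc (1:ℤ) (T:ℤ), μ t * Δy t =
      ∑ s ∈ Finset.Icc (-(na:ℤ)+1) (T:ℤ), Δy s * μ s := by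
    have hsub : Finset.Icc (1:ℤ) (T:ℤ) ⊆ Finset.Icc (-(na:ℤ)+1) (T:ℤ) :=
      Finset.Icc_subset_Icc (by omega) (by omega)
    rw [Finset.sum_subset hsub (fun s _ hns => by rw [hμ s hns, zero_mul])]
    exact Finset.sum_congr rfl fun s _ => mul_comm _ _
  have hA : ∑ t ∈ Finset.Icc (1:ℤ) (T:ℤ), μ t * ∑ i : Fin na, a i * Δy (t - ((i.val:ℤ) + 1)) =
      ∑ s ∈ Finset.Icc (-(na:ℤ)+1) (T:ℤ), Δy s * ∑ i : Fin na, a i * μ (s + ((i.val:ℤ) + 1)) := by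
    calc ∑ t ∈ Finset.Icc (1:ℤ) (T:ℤ), μ t * ∑ i : Fin na, a i * Δy (t - ((i.val:ℤ) + 1))
        = ∑ t ∈ Finset.Icc (1:ℤ) (T:ℤ), ∑ i : Fin na, a i * (μ t * Δy (t - ((i.val:ℤ) + 1))) := by
          refine Finset.sum_congr rfl fun t _ => ?_
          rw [Finset.mul_sum]; exact Finset.sum_congr rfl fun i _ => by ring
      _ = ∑ i : Fin na, ∑ t ∈ Finset.Icc (1:ℤ) (T:ℤ), a i * (μ t * Δy (t - ((i.val:ℤ) + 1))) :=
          Finset.sum_comm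
      _ = ∑ i : Fin na, a i * ∑ t ∈ Finset.Icc (1:ℤ) (T:ℤ), μ t * Δy (t - ((i.val:ℤ) + 1)) := by
          exact Finset.sum_congr rfl fun i _ => (Finset.mul_sum _ _ _).symm
      _ = ∑ i : Fin na, a i * ∑ s ∈ Finset.Icc (-(na:ℤ)+1) (T:ℤ), μ (s + ((i.val:ℤ) + 1)) * Δy s := by
          exact Finset.sum_congr rfl fun i _ => by rw [hyshift i]
      _ = ∑ i : Fin na, ∑ s ∈ Finset.Icc (-(na:ℤ)+1) (T:ℤ), Δy s * (a i * μ (s + ((i.val:ℤ) + 1))) := by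
          refine Finset.sum_congr rfl fun i _ => ?_
          rw [Finset.mul_sum]; exact Finset.sum_congr rfl fun s _ => by ring
      _ = ∑ s ∈ Finset.Icc (-(na:ℤ)+1) (T:ℤ), ∑ i : Fin na, Δy s * (a i * μ (s + ((i.val:ℤ) + 1))) :=
          Finset.sum_comm
      _ = ∑ s ∈ Finset.Icc (-(na:ℤ)+1) (T:ℤ), Δy s * ∑ i : Fin na, a i * μ (s + ((i.val:ℤ) + 1)) :=
          Finset.sum_congr rfl fun s _ => (Finset.mul_sum _ _ _).symm
  have hB : ∑ t ∈ Finset.Icc (1:ℤ) (T:ℤ), μ t * ∑ i : Fin nb, b i * Δu (t - ((i.val:ℤ) + 1)) =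
      ∑ s ∈ Finset.Icc (-(nb:ℤ)+1) ((T:ℤ)-1), Δu s * ∑ i : Fin nb, b i * μ (s + ((i.val:ℤ) + 1)) := by
    calc ∑ t ∈ Finset.Icc (1:ℤ) (T:ℤ), μ t * ∑ i : Fin nb, b i * Δu (t - ((i.val:ℤ) + 1))
        = ∑ t ∈ Finset.Icc (1:ℤ) (T:ℤ), ∑ i : Fin nb, b i * (μ t * Δu (t - ((i.val:ℤ) + 1))) := by
          refine Finset.sum_congr rfl fun t _ => ?_
          rw [Finset.mul_sum]; exact Finset.sum_congr rfl fun i _ => by ring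
      _ = ∑ i : Fin nb, ∑ t ∈ Finset.Icc (1:ℤ) (T:ℤ), b i * (μ t * Δu (t - ((i.val:ℤ) + 1))) :=
          Finset.sum_comm
      _ = ∑ i : Fin nb, b i * ∑ t ∈ Finset.Icc (1:ℤ) (T:ℤ), μ t * Δu (t - ((i.val:ℤ) + 1)) := by
          exact Finset.sum_congr rfl fun i _ => (Finset.mul_sum _ _ _).symm
      _ = ∑ i : Fin nb, b i * ∑ s ∈ Finset.Icc (-(nb:ℤ)+1) ((T:ℤ)-1), μ (s + ((i.val:ℤ) + 1)) * Δu s := by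
          exact Finset.sum_congr rfl fun i _ => by rw [hushift i]
      _ = ∑ i : Fin nb, ∑ s ∈ Finset.Icc (-(nb:ℤ)+1) ((T:ℤ)-1), Δu s * (b i * μ (s + ((i.val:ℤ) + 1))) := by
          refine Finset.sum_congr rfl fun i _ => ?_
          rw [Finset.mul_sum]; exact Finset.sum_congr rfl fun s _ => by ring
      _ = ∑ s ∈ Finset.Icc (-(nb:ℤ)+1) ((T:ℤ)-1), ∑ i : Fin nb, Δu s * (b i * μ (s + ((i.val:ℤ) + 1))) :=
          Finset.sum_comm
      _ = ∑ s ∈ Finset.Icc (-(nb:ℤ)+1) ((T:ℤ)-1), Δu s * ∑ i : Fin nb, b i * μ (s + ((i.val:ℤ) + 1)) :=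
          Finset.sum_congr rfl fun s _ => (Finset.mul_sum _ _ _).symm
  have hsplit : ∑ t ∈ Finset.Icc (1:ℤ) (T:ℤ), μ t *
        (h t - (∑ i : Fin na, a i * Δy (t - (i.val + 1 : ℤ)))
          + (∑ i : Fin nb, b i * Δu (t - (i.val + 1 : ℤ))) - Δy t)
      = (∑ t ∈ Finset.Icc (1:ℤ) (T:ℤ), μ t * h t)
        - (∑ t ∈ Finset.Icc (1:ℤ) (T:ℤ), μ t * ∑ i : Fin na, a i * Δy (t - ((i.val:ℤ) + 1)))
        + (∑ t ∈ Finset.Icc (1:ℤ) (T:ℤ), μ t * ∑ i : Fin nb, b i * Δu (t - ((i.val:ℤ) + 1)))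
        - (∑ t ∈ Finset.Icc (1:ℤ) (T:ℤ), μ t * Δy t) := by
    simp only [mul_sub, mul_add, Finset.sum_sub_distrib, Finset.sum_add_distrib]
  rw [hsplit, hA, hB, hy0]
  have hR : ∑ s ∈ Finset.Icc (-(na:ℤ)+1) (T:ℤ),
        Δy s * (μ s + ∑ i : Fin na, a i * μ (s + ((i.val:ℤ) + 1)))
      = (∑ s ∈ Finset.Icc (-(na:ℤ)+1) (T:ℤ), Δy s * μ s)
        + ∑ s ∈ Finset.Icc (-(na:ℤ)+1) (T:ℤ),
            Δy s * ∑ i : Fin na, a i * μ (s + ((i.val:ℤ) + 1)) := by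
    rw [← Finset.sum_add_distrib]
    exact Finset.sum_congr rfl fun s _ => by ring
  rw [hR]; ring

private def ext0 (I : Finset ℤ) (z : {x // x ∈ I} → ℝ) (s : ℤ) : ℝ :=
  if hs : s ∈ I then z ⟨s, hs⟩ else 0

private lemma cont_ext0 (I : Finset ℤ) (s : ℤ) :
    Continuous fun z : {x // x ∈ I} → ℝ => ext0 I z s := by
  unfold ext0
  by_cases hs : s ∈ I
  · simp only [dif_pos hs]; exact continuous_apply _
  · simp only [dif_neg hs]; exact continuous_const

private lemma ext0_comb (I : Finset ℤ) (p q : ℝ) (z1 z2 : {x // x ∈ I} → ℝ) (s : ℤ) :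
    ext0 I (p • z1 + q • z2) s = p * ext0 I z1 s + q * ext0 I z2 s := by
  unfold ext0
  split_ifs with hs
  · simp [smul_eq_mul]
  · ring

private def cmapD (na nb : ℕ) (a : Fin na → ℝ) (b : Fin nb → ℝ) (h : ℤ → ℝ)
    (u y : ℤ → ℝ) (t : ℤ) : ℝ :=
  h t - (∑ i : Fin na, a i * y (t - (i.val + 1 : ℤ)))
    + (∑ i : Fin nb, b i * u (t - (i.val + 1 : ℤ))) - y t

private lemma cmapD_comb (na nb : ℕ) (a : Fin na → ℝ) (b : Fin nb → ℝ) (h : ℤ → ℝ)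
    (p q : ℝ) (hpq : p + q = 1) (u1 y1 u2 y2 : ℤ → ℝ) (t : ℤ) :
    cmapD na nb a b h (fun s => p * u1 s + q * u2 s) (fun s => p * y1 s + q * y2 s) t
      = p * cmapD na nb a b h u1 y1 t + q * cmapD na nb a b h u2 y2 t := by
  unfold cmapD
  have hsum : ∀ (n : ℕ) (c : Fin n → ℝ) (f g : Fin n → ℝ),
      (∑ i, c i * (p * f i + q * g i)) = p * (∑ i, c i * f i) + q * (∑ i, c i * g i) := by
    intro n c f g
    rw [Finset.mul_sum, Finset.mul_sum, ← Finset.sum_add_distrib]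
    exact Finset.sum_congr rfl fun i _ => by ring
  rw [hsum na a (fun i => y1 (t - (i.val + 1 : ℤ))) (fun i => y2 (t - (i.val + 1 : ℤ))),
      hsum nb b (fun i => u1 (t - (i.val + 1 : ℤ))) (fun i => u2 (t - (i.val + 1 : ℤ)))]
  linear_combination (-(h t)) * hpq

private lemma cmapD_congr (na nb : ℕ) (a : Fin na → ℝ) (b : Fin nb → ℝ) (h : ℤ → ℝ)
    (u y u' y' : ℤ → ℝ) (t : ℤ)
    (hu : ∀ i : Fin nb, u (t - (i.val + 1 : ℤ)) = u' (t - (i.val + 1 : ℤ)))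
    (hy : ∀ i : Fin na, y (t - (i.val + 1 : ℤ)) = y' (t - (i.val + 1 : ℤ)))
    (hyt : y t = y' t) :
    cmapD na nb a b h u y t = cmapD na nb a b h u' y' t := by
  unfold cmapD
  have e1 : ∑ i : Fin na, a i * y (t - (i.val + 1 : ℤ)) =
      ∑ i : Fin na, a i * y' (t - (i.val + 1 : ℤ)) :=
    Finset.sum_congr rfl fun i _ => by rw [hy i]
  have e2 : ∑ i : Fin nb, b i * u (t - (i.val + 1 : ℤ)) =
      ∑ i : Fin nb, b i * u' (t - (i.val + 1 : ℤ)) :=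
    Finset.sum_congr rfl fun i _ => by rw [hu i]
  rw [hyt, e1, e2]

private lemma max_sub_max (x : ℝ) : max x 0 - max (-x) 0 = x := by
  rcases le_total 0 x with hx | hx
  · rw [max_eq_left hx, max_eq_right (by linarith)]; ring
  · rw [max_eq_right hx, max_eq_left (by linarith)]; ring

private lemma max_add_max (x : ℝ) : max x 0 + max (-x) 0 = |x| := by
  rcases le_total 0 x with hx | hx
  · rw [max_eq_left hx, max_eq_right (by linarith), abs_of_nonneg hx]; ring
  · rw [max_eq_right hx, max_eq_left (by linarith), abs_of_nonpos hx]; ring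

private lemma ite_mul_neg (e x : ℝ) (he : 0 ≤ e) :
    (if 0 ≤ x then -e else e) * x = -(e * |x|) := by
  split_ifs with hx
  · rw [abs_of_nonneg hx]; ring
  · rw [abs_of_neg (lt_of_not_ge hx)]; ring

private lemma ite_mul_pos (e x : ℝ) (he : 0 ≤ e) :
    (if 0 ≤ x then e else -e) * x = e * |x| := by
  split_ifs with hx
  · rw [abs_of_nonneg hx]
  · rw [abs_of_neg (lt_of_not_ge hx)]; ring
private lemma exists_certificate (T na nb : ℕ) (hT : 0 < T)
    (εu εy : ℝ) (hεu : 0 ≤ εu) (hεy : 0 ≤ εy)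
    (a : Fin na → ℝ) (b : Fin nb → ℝ) (h : ℤ → ℝ)
    (hinf : ¬ ∃ Δu Δy : ℤ → ℝ,
        (∀ s ∈ Finset.Icc (-(nb : ℤ) + 1) ((T : ℤ) - 1), |Δu s| ≤ εu) ∧
        (∀ s ∈ Finset.Icc (-(na : ℤ) + 1) (T : ℤ), |Δy s| ≤ εy) ∧
        (∀ t ∈ Finset.Icc (1 : ℤ) (T : ℤ),
          h t - (∑ i : Fin na, a i * Δy (t - (i.val + 1 : ℤ)))
              + (∑ i : Fin nb, b i * Δu (t - (i.val + 1 : ℤ))) - Δy t = 0)) :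
    ∃ μ : ℤ → ℝ, (∀ t : ℤ, t ∉ Finset.Icc (1:ℤ) (T:ℤ) → μ t = 0) ∧
      0 < (∑ t ∈ Finset.Icc (1:ℤ) (T:ℤ), μ t * h t)
          - εu * (∑ s ∈ Finset.Icc (-(nb:ℤ)+1) ((T:ℤ)-1),
              |∑ i : Fin nb, b i * μ (s + (i.val + 1 : ℤ))|)
          - εy * (∑ s ∈ Finset.Icc (-(na:ℤ)+1) (T:ℤ),
              |μ s + ∑ i : Fin na, a i * μ (s + (i.val + 1 : ℤ))|) := by
  classical
  -- notation
  let Iu : Finset ℤ := Finset.Icc (-(nb:ℤ)+1) ((T:ℤ)-1)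
  let Iy : Finset ℤ := Finset.Icc (-(na:ℤ)+1) (T:ℤ)
  let D := ({x // x ∈ Iu} → ℝ) × ({x // x ∈ Iy} → ℝ)
  let Φ : D → (Fin T → ℝ) := fun z k =>
    cmapD na nb a b h (ext0 Iu z.1) (ext0 Iy z.2) ((k.val : ℤ) + 1)
  let C : Set D := (Set.univ.pi fun _ : {x // x ∈ Iu} => Set.Icc (-εu) εu) ×ˢ
                   (Set.univ.pi fun _ : {x // x ∈ Iy} => Set.Icc (-εy) εy)
  -- C is compact and convex
  have hCcomp : IsCompact C :=
    (isCompact_univ_pi fun _ => isCompact_Icc).prod (isCompact_univ_pi fun _ => isCompact_Icc)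
  have hCconv : Convex ℝ C :=
    (convex_pi fun _ _ => convex_Icc _ _).prod (convex_pi fun _ _ => convex_Icc _ _)
  -- Φ is continuous
  have hΦcont : Continuous Φ := by
    apply continuous_pi
    intro k
    show Continuous fun z : D =>
      cmapD na nb a b h (ext0 Iu z.1) (ext0 Iy z.2) ((k.val : ℤ) + 1)
    unfold cmapD
    refine ((Continuous.add (continuous_const.sub ?_) ?_).sub ?_)
    · exact continuous_finset_sum _ fun i _ =>
        continuous_const.mul ((cont_ext0 Iy _).comp continuous_snd)
    · exact continuous_finset_sum _ fun i _ =>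
        continuous_const.mul ((cont_ext0 Iu _).comp continuous_fst)
    · exact (cont_ext0 Iy _).comp continuous_snd
  -- the image set
  let S : Set (Fin T → ℝ) := Φ '' C
  have hSconv : Convex ℝ S := by
    rintro v1 ⟨z1, hz1, rfl⟩ v2 ⟨z2, hz2, rfl⟩ p q hp hq hpq
    refine ⟨p • z1 + q • z2, hCconv hz1 hz2 hp hq hpq, ?_⟩
    funext k
    show cmapD na nb a b h (ext0 Iu (p • z1 + q • z2).1) (ext0 Iy (p • z1 + q • z2).2)
        ((k.val : ℤ) + 1) = (p • Φ z1 + q • Φ z2) k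
    have h1 : ext0 Iu (p • z1 + q • z2).1 = fun s => p * ext0 Iu z1.1 s + q * ext0 Iu z2.1 s := by
      funext s; exact ext0_comb Iu p q z1.1 z2.1 s
    have h2 : ext0 Iy (p • z1 + q • z2).2 = fun s => p * ext0 Iy z1.2 s + q * ext0 Iy z2.2 s := by
      funext s; exact ext0_comb Iy p q z1.2 z2.2 s
    rw [h1, h2, cmapD_comb na nb a b h p q hpq]
    rfl
  have hSclosed : IsClosed S := (hCcomp.image hΦcont).isClosed
  -- 0 is not in S
  have h0S : (0 : Fin T → ℝ) ∉ S := by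
    rintro ⟨z, hzC, hz0⟩
    apply hinf
    refine ⟨ext0 Iu z.1, ext0 Iy z.2, ?_, ?_, ?_⟩
    · intro s hs
      have := hzC.1 (⟨s, hs⟩ : {x // x ∈ Iu}) (Set.mem_univ _)
      rw [show ext0 Iu z.1 s = z.1 ⟨s, hs⟩ from dif_pos hs]
      exact abs_le.mpr ⟨this.1, this.2⟩
    · intro s hs
      have := hzC.2 (⟨s, hs⟩ : {x // x ∈ Iy}) (Set.mem_univ _)
      rw [show ext0 Iy z.2 s = z.2 ⟨s, hs⟩ from dif_pos hs]
      exact abs_le.mpr ⟨this.1, this.2⟩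
    · intro t ht
      rw [Finset.mem_Icc] at ht
      have hk : (t - 1).toNat < T := by omega
      have hkt : (((⟨(t - 1).toNat, hk⟩ : Fin T).val : ℤ) + 1) = t := by
        simp only []; omega
      have := congrFun hz0 (⟨(t - 1).toNat, hk⟩ : Fin T)
      show cmapD na nb a b h (ext0 Iu z.1) (ext0 Iy z.2) t = 0
      rw [← hkt]
      exact this
  -- separation
  obtain ⟨f, u, hf0, hfS⟩ := geometric_hahn_banach_point_closed hSconv hSclosed h0S
  rw [map_zero] at hf0
  -- representation of f
  set μ0 : Fin T → ℝ := fun k => f (fun j => if k = j then (1:ℝ) else 0) with hμ0def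
  have hrepr : ∀ v : Fin T → ℝ, f v = ∑ k : Fin T, v k * μ0 k := by
    intro v
    conv_lhs => rw [pi_eq_sum_univ v]
    rw [map_sum]
    exact Finset.sum_congr rfl fun k _ => by rw [map_smul, smul_eq_mul]
  -- μ on ℤ
  set μ : ℤ → ℝ := fun t => ∑ k : Fin T, if t = (k.val : ℤ) + 1 then μ0 k else 0 with hμdef
  have hμ0Z : ∀ t : ℤ, t ∉ Finset.Icc (1:ℤ) (T:ℤ) → μ t = 0 := by
    intro t ht
    apply Finset.sum_eq_zero
    intro k _
    rw [if_neg]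
    intro he
    exact ht (by rw [Finset.mem_Icc]; have := k.isLt; omega)
  have hμk : ∀ k : Fin T, μ ((k.val : ℤ) + 1) = μ0 k := by
    intro k
    rw [hμdef]
    simp only []
    rw [Finset.sum_eq_single k]
    · rw [if_pos rfl]
    · intro k' _ hk'
      exact if_neg fun he => hk' (Fin.ext (by omega))
    · intro hk; exact absurd (Finset.mem_univ k) hk
  -- reindexing
  have hreindex : ∀ g : ℤ → ℝ,
      ∑ t ∈ Finset.Icc (1:ℤ) (T:ℤ), g t = ∑ k : Fin T, g ((k.val : ℤ) + 1) := by
    intro g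
    rw [show Finset.Icc (1:ℤ) (T:ℤ) =
        Finset.univ.map ⟨fun k : Fin T => (k.val : ℤ) + 1,
          fun k k' he => Fin.ext (by
            change (k.val : ℤ) + 1 = (k'.val : ℤ) + 1 at he; omega)⟩ by
      ext t
      simp only [Finset.mem_Icc, Finset.mem_map, Finset.mem_univ, true_and,
        Function.Embedding.coeFn_mk]
      constructor
      · rintro ⟨h1, h2⟩
        exact ⟨⟨(t - 1).toNat, by omega⟩, by show (((t - 1).toNat : ℕ) : ℤ) + 1 = t; omega⟩
      · rintro ⟨k, hk⟩
        have hk' : (k.val : ℤ) + 1 = t := hk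
        have := k.isLt; omega]
    rw [Finset.sum_map]
    rfl
  -- worst-case point
  let β : ℤ → ℝ := fun s => ∑ i : Fin nb, b i * μ (s + (i.val + 1 : ℤ))
  let γ : ℤ → ℝ := fun s => μ s + ∑ i : Fin na, a i * μ (s + (i.val + 1 : ℤ))
  let zstar : D := (fun j => if 0 ≤ β (j : ℤ) then -εu else εu,
                    fun j => if 0 ≤ γ (j : ℤ) then εy else -εy)
  have hzC : zstar ∈ C := by
    constructor
    · intro j _
      show (if 0 ≤ β (j : ℤ) then -εu else εu) ∈ Set.Icc (-εu) εu
      split_ifs <;> constructor <;> linarith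
    · intro j _
      show (if 0 ≤ γ (j : ℤ) then εy else -εy) ∈ Set.Icc (-εy) εy
      split_ifs <;> constructor <;> linarith
  -- the key inequality
  have hmain : u < f (Φ zstar) := hfS _ ⟨zstar, hzC, rfl⟩
  rw [hrepr] at hmain
  have hΦμ : ∑ k : Fin T, Φ zstar k * μ0 k =
      ∑ t ∈ Finset.Icc (1:ℤ) (T:ℤ),
        μ t * cmapD na nb a b h (ext0 Iu zstar.1) (ext0 Iy zstar.2) t := by
    rw [hreindex (fun t => μ t * cmapD na nb a b h (ext0 Iu zstar.1) (ext0 Iy zstar.2) t)]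
    exact Finset.sum_congr rfl fun k _ => by rw [hμk k]; exact mul_comm _ _
  rw [hΦμ] at hmain
  have hexp := expand_sum T na nb a b h (ext0 Iu zstar.1) (ext0 Iy zstar.2) μ hμ0Z
  -- evaluate the worst-case sums
  have hUstar : ∑ s ∈ Finset.Icc (-(nb:ℤ)+1) ((T:ℤ)-1),
        ext0 Iu zstar.1 s * ∑ i : Fin nb, b i * μ (s + (i.val + 1 : ℤ))
      = -(εu * ∑ s ∈ Finset.Icc (-(nb:ℤ)+1) ((T:ℤ)-1),
            |∑ i : Fin nb, b i * μ (s + (i.val + 1 : ℤ))|) := by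
    rw [Finset.mul_sum, ← Finset.sum_neg_distrib]
    refine Finset.sum_congr rfl fun s hs => ?_
    have he : ext0 Iu zstar.1 s = if 0 ≤ β s then -εu else εu := by
      rw [show ext0 Iu zstar.1 s = zstar.1 ⟨s, hs⟩ from dif_pos hs]
    rw [he]
    exact ite_mul_neg εu (β s) hεu
  have hYstar : ∑ s ∈ Finset.Icc (-(na:ℤ)+1) (T:ℤ),
        ext0 Iy zstar.2 s * (μ s + ∑ i : Fin na, a i * μ (s + (i.val + 1 : ℤ)))
      = εy * ∑ s ∈ Finset.Icc (-(na:ℤ)+1) (T:ℤ),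
            |μ s + ∑ i : Fin na, a i * μ (s + (i.val + 1 : ℤ))| := by
    rw [Finset.mul_sum]
    refine Finset.sum_congr rfl fun s hs => ?_
    have he : ext0 Iy zstar.2 s = if 0 ≤ γ s then εy else -εy := by
      rw [show ext0 Iy zstar.2 s = zstar.2 ⟨s, hs⟩ from dif_pos hs]
    rw [he]
    exact ite_mul_pos εy (γ s) hεy
  unfold cmapD at hmain
  rw [hexp, hUstar, hYstar] at hmain
  exact ⟨μ, hμ0Z, by linarith⟩
private lemma weak_duality (T na nb : ℕ)
    (εu εy : ℝ)
    (a : Fin na → ℝ) (b : Fin nb → ℝ) (h : ℤ → ℝ) (q : ℝ)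
    (hI : q ≤ 0 ∧ ∃ Δu Δy : ℤ → ℝ,
        (∀ s ∈ Finset.Icc (-(nb : ℤ) + 1) ((T : ℤ) - 1), |Δu s| ≤ εu) ∧
        (∀ s ∈ Finset.Icc (-(na : ℤ) + 1) (T : ℤ), |Δy s| ≤ εy) ∧
        (∀ t ∈ Finset.Icc (1 : ℤ) (T : ℤ),
          h t - (∑ i : Fin na, a i * Δy (t - (i.val + 1 : ℤ)))
              + (∑ i : Fin nb, b i * Δu (t - (i.val + 1 : ℤ))) - Δy t = 0))
    (hII : ∃ ψp ψm ζp ζm μ : ℤ → ℝ,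
        (∀ s ∈ Finset.Icc (-(nb : ℤ) + 1) ((T : ℤ) - 1), 0 ≤ ψp s) ∧
        (∀ s ∈ Finset.Icc (-(nb : ℤ) + 1) ((T : ℤ) - 1), 0 ≤ ψm s) ∧
        (∀ s ∈ Finset.Icc (-(na : ℤ) + 1) (T : ℤ), 0 ≤ ζp s) ∧
        (∀ s ∈ Finset.Icc (-(na : ℤ) + 1) (T : ℤ), 0 ≤ ζm s) ∧
        (∀ t : ℤ, t ∉ Finset.Icc (1 : ℤ) (T : ℤ) → μ t = 0) ∧
        (∀ s ∈ Finset.Icc (-(nb : ℤ) + 1) ((T : ℤ) - 1),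
          ψp s - ψm s = ∑ i : Fin nb, b i * μ (s + (i.val + 1 : ℤ))) ∧
        (∀ s ∈ Finset.Icc (-(na : ℤ) + 1) (T : ℤ),
          ζp s - ζm s = -(μ s + ∑ i : Fin na, a i * μ (s + (i.val + 1 : ℤ)))) ∧
        (-q + (∑ t ∈ Finset.Icc (1 : ℤ) (T : ℤ), h t * μ t)
          + εu * (∑ s ∈ Finset.Icc (-(nb : ℤ) + 1) ((T : ℤ) - 1), (ψp s + ψm s))
          + εy * (∑ s ∈ Finset.Icc (-(na : ℤ) + 1) (T : ℤ), (ζp s + ζm s)) < 0)) :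
    False := by
  obtain ⟨hq, Δu, Δy, hub, hyb, hc⟩ := hI
  obtain ⟨ψp, ψm, ζp, ζm, μ, hψp, hψm, hζp, hζm, hμ0, hmψ, hmζ, hQ⟩ := hII
  have hexp := expand_sum T na nb a b h Δu Δy μ hμ0
  have hz : ∑ t ∈ Finset.Icc (1:ℤ) (T:ℤ), μ t *
        (h t - (∑ i : Fin na, a i * Δy (t - (i.val + 1 : ℤ)))
          + (∑ i : Fin nb, b i * Δu (t - (i.val + 1 : ℤ))) - Δy t) = 0 :=
    Finset.sum_eq_zero fun t ht => by rw [hc t ht, mul_zero]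
  rw [hz] at hexp
  have hU : ∑ s ∈ Finset.Icc (-(nb:ℤ)+1) ((T:ℤ)-1),
        Δu s * (∑ i : Fin nb, b i * μ (s + (i.val + 1 : ℤ)))
      ≤ εu * ∑ s ∈ Finset.Icc (-(nb:ℤ)+1) ((T:ℤ)-1), (ψp s + ψm s) := by
    rw [Finset.mul_sum]
    refine Finset.sum_le_sum fun s hs => ?_
    rw [← hmψ s hs]
    obtain ⟨h1, h2⟩ := abs_le.mp (hub s hs)
    have e1 : Δu s * ψp s ≤ εu * ψp s := mul_le_mul_of_nonneg_right h2 (hψp s hs)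
    have e2 : (-(Δu s)) * ψm s ≤ εu * ψm s :=
      mul_le_mul_of_nonneg_right (by linarith) (hψm s hs)
    nlinarith [e1, e2]
  have hY : -(εy * ∑ s ∈ Finset.Icc (-(na:ℤ)+1) (T:ℤ), (ζp s + ζm s))
      ≤ ∑ s ∈ Finset.Icc (-(na:ℤ)+1) (T:ℤ),
          Δy s * (μ s + ∑ i : Fin na, a i * μ (s + (i.val + 1 : ℤ))) := by
    rw [Finset.mul_sum, ← Finset.sum_neg_distrib]
    refine Finset.sum_le_sum fun s hs => ?_
    have hγ : μ s + ∑ i : Fin na, a i * μ (s + (i.val + 1 : ℤ)) = ζm s - ζp s := by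
      have := hmζ s hs; linarith
    rw [hγ]
    obtain ⟨h1, h2⟩ := abs_le.mp (hyb s hs)
    have e1 : (-(Δy s)) * ζm s ≤ εy * ζm s :=
      mul_le_mul_of_nonneg_right (by linarith) (hζm s hs)
    have e2 : Δy s * ζp s ≤ εy * ζp s := mul_le_mul_of_nonneg_right h2 (hζp s hs)
    nlinarith [e1, e2]
  have hhm : ∑ t ∈ Finset.Icc (1:ℤ) (T:ℤ), h t * μ t
      = ∑ t ∈ Finset.Icc (1:ℤ) (T:ℤ), μ t * h t :=
    Finset.sum_congr rfl fun t _ => mul_comm _ _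
  rw [hhm] at hQ
  linarith [hexp, hU, hY, hQ, hq]

/-- Pointwise strong-alternative content of Theorem 3.  Exactly one
of the following holds: (I) `q ≤ 0` and a feasible noise pair `(Δu, Δy)` exists;
(II) there exists a dual certificate `(ψ⁺, ψ⁻, ζ⁺, ζ⁻, μ)` with the matching
conditions and negative value `Q < 0`.  Vectors `a ∈ ℝ^{n_a}`, `b ∈ ℝ^{n_b}` are
indexed so that `a i` stands for `a_{i+1}`; `μ` is extended by zero outside
`{1,…,T}`. -/
theorem alternatives_strong_alternative
    (T na nb : ℕ) (hT : 0 < T) (hna : 0 < na) (hnb : 0 < nb)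
    (εu εy : ℝ) (hεu : 0 ≤ εu) (hεy : 0 ≤ εy)
    (a : Fin na → ℝ) (b : Fin nb → ℝ) (h : ℤ → ℝ) (q : ℝ) :
    Xor'
      (q ≤ 0 ∧ ∃ Δu Δy : ℤ → ℝ,
        (∀ s ∈ Finset.Icc (-(nb : ℤ) + 1) ((T : ℤ) - 1), |Δu s| ≤ εu) ∧
        (∀ s ∈ Finset.Icc (-(na : ℤ) + 1) (T : ℤ), |Δy s| ≤ εy) ∧
        (∀ t ∈ Finset.Icc (1 : ℤ) (T : ℤ),
          h t - (∑ i : Fin na, a i * Δy (t - (i.val + 1 : ℤ)))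
              + (∑ i : Fin nb, b i * Δu (t - (i.val + 1 : ℤ))) - Δy t = 0))
      (∃ ψp ψm ζp ζm μ : ℤ → ℝ,
        (∀ s ∈ Finset.Icc (-(nb : ℤ) + 1) ((T : ℤ) - 1), 0 ≤ ψp s) ∧
        (∀ s ∈ Finset.Icc (-(nb : ℤ) + 1) ((T : ℤ) - 1), 0 ≤ ψm s) ∧
        (∀ s ∈ Finset.Icc (-(na : ℤ) + 1) (T : ℤ), 0 ≤ ζp s) ∧
        (∀ s ∈ Finset.Icc (-(na : ℤ) + 1) (T : ℤ), 0 ≤ ζm s) ∧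
        (∀ t : ℤ, t ∉ Finset.Icc (1 : ℤ) (T : ℤ) → μ t = 0) ∧
        (∀ s ∈ Finset.Icc (-(nb : ℤ) + 1) ((T : ℤ) - 1),
          ψp s - ψm s = ∑ i : Fin nb, b i * μ (s + (i.val + 1 : ℤ))) ∧
        (∀ s ∈ Finset.Icc (-(na : ℤ) + 1) (T : ℤ),
          ζp s - ζm s = -(μ s + ∑ i : Fin na, a i * μ (s + (i.val + 1 : ℤ)))) ∧
        (-q + (∑ t ∈ Finset.Icc (1 : ℤ) (T : ℤ), h t * μ t)
          + εu * (∑ s ∈ Finset.Icc (-(nb : ℤ) + 1) ((T : ℤ) - 1), (ψp s + ψm s))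
          + εy * (∑ s ∈ Finset.Icc (-(na : ℤ) + 1) (T : ℤ), (ζp s + ζm s)) < 0)) := by
  classical
  by_cases hI : (q ≤ 0 ∧ ∃ Δu Δy : ℤ → ℝ,
        (∀ s ∈ Finset.Icc (-(nb : ℤ) + 1) ((T : ℤ) - 1), |Δu s| ≤ εu) ∧
        (∀ s ∈ Finset.Icc (-(na : ℤ) + 1) (T : ℤ), |Δy s| ≤ εy) ∧
        (∀ t ∈ Finset.Icc (1 : ℤ) (T : ℤ),
          h t - (∑ i : Fin na, a i * Δy (t - (i.val + 1 : ℤ)))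
              + (∑ i : Fin nb, b i * Δu (t - (i.val + 1 : ℤ))) - Δy t = 0))
  · exact Or.inl ⟨hI, fun hII => weak_duality T na nb εu εy a b h q hI hII⟩
  · refine Or.inr ⟨?_, hI⟩
    by_cases hfeas : ∃ Δu Δy : ℤ → ℝ,
        (∀ s ∈ Finset.Icc (-(nb : ℤ) + 1) ((T : ℤ) - 1), |Δu s| ≤ εu) ∧
        (∀ s ∈ Finset.Icc (-(na : ℤ) + 1) (T : ℤ), |Δy s| ≤ εy) ∧
        (∀ t ∈ Finset.Icc (1 : ℤ) (T : ℤ),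
          h t - (∑ i : Fin na, a i * Δy (t - (i.val + 1 : ℤ)))
              + (∑ i : Fin nb, b i * Δu (t - (i.val + 1 : ℤ))) - Δy t = 0)
    · -- feasible, so q > 0 : trivial certificate
      have hq : 0 < q := by
        by_contra hq
        exact hI ⟨le_of_not_gt hq, hfeas⟩
      refine ⟨fun _ => 0, fun _ => 0, fun _ => 0, fun _ => 0, fun _ => 0,
        fun s _ => le_refl 0, fun s _ => le_refl 0, fun s _ => le_refl 0, fun s _ => le_refl 0,
        fun t _ => rfl, fun s _ => by simp, fun s _ => by simp, by simp; linarith⟩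
    · -- infeasible : scaled separation certificate
      obtain ⟨μ, hμ0, hW⟩ := exists_certificate T na nb hT εu εy hεu hεy a b h hfeas
      set W : ℝ := (∑ t ∈ Finset.Icc (1:ℤ) (T:ℤ), μ t * h t)
          - εu * (∑ s ∈ Finset.Icc (-(nb:ℤ)+1) ((T:ℤ)-1),
              |∑ i : Fin nb, b i * μ (s + (i.val + 1 : ℤ))|)
          - εy * (∑ s ∈ Finset.Icc (-(na:ℤ)+1) (T:ℤ),
              |μ s + ∑ i : Fin na, a i * μ (s + (i.val + 1 : ℤ))|) with hWdef
      set d : ℝ := (1 + |q|) / W with hddef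
      have hd : 0 < d := div_pos (by positivity) hW
      set μF : ℤ → ℝ := fun t => -(d * μ t) with hμFdef
      have hβF : ∀ s : ℤ, (∑ i : Fin nb, b i * μF (s + (i.val + 1 : ℤ)))
          = -(d * ∑ i : Fin nb, b i * μ (s + (i.val + 1 : ℤ))) := by
        intro s
        rw [Finset.mul_sum, ← Finset.sum_neg_distrib]
        exact Finset.sum_congr rfl fun i _ => by rw [hμFdef]; ring
      have hγF : ∀ s : ℤ, (μF s + ∑ i : Fin na, a i * μF (s + (i.val + 1 : ℤ)))
          = -(d * (μ s + ∑ i : Fin na, a i * μ (s + (i.val + 1 : ℤ)))) := by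
        intro s
        rw [show (∑ i : Fin na, a i * μF (s + (i.val + 1 : ℤ)))
            = -(d * ∑ i : Fin na, a i * μ (s + (i.val + 1 : ℤ))) by
          rw [Finset.mul_sum, ← Finset.sum_neg_distrib]
          exact Finset.sum_congr rfl fun i _ => by rw [hμFdef]; ring]
        rw [show μF s = -(d * μ s) from rfl]
        ring
      refine ⟨fun s => max (∑ i : Fin nb, b i * μF (s + (i.val + 1 : ℤ))) 0,
              fun s => max (-(∑ i : Fin nb, b i * μF (s + (i.val + 1 : ℤ)))) 0,
              fun s => max (-(μF s + ∑ i : Fin na, a i * μF (s + (i.val + 1 : ℤ)))) 0,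
              fun s => max (μF s + ∑ i : Fin na, a i * μF (s + (i.val + 1 : ℤ))) 0,
              μF,
              fun s _ => le_max_right _ _, fun s _ => le_max_right _ _,
              fun s _ => le_max_right _ _, fun s _ => le_max_right _ _,
              fun t ht => by rw [hμFdef]; simp [hμ0 t ht],
              fun s _ => max_sub_max _,
              fun s _ => by
                rw [show max (-(μF s + ∑ i : Fin na, a i * μF (s + (i.val + 1 : ℤ)))) 0 -
                      max (μF s + ∑ i : Fin na, a i * μF (s + (i.val + 1 : ℤ))) 0
                    = -(max (μF s + ∑ i : Fin na, a i * μF (s + (i.val + 1 : ℤ))) 0 -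
                        max (-(μF s + ∑ i : Fin na, a i * μF (s + (i.val + 1 : ℤ)))) 0) by ring,
                  max_sub_max],
              ?_⟩
      -- the value computation
      have e1 : ∑ t ∈ Finset.Icc (1:ℤ) (T:ℤ), h t * μF t
          = -(d * ∑ t ∈ Finset.Icc (1:ℤ) (T:ℤ), μ t * h t) := by
        rw [Finset.mul_sum, ← Finset.sum_neg_distrib]
        exact Finset.sum_congr rfl fun t _ => by rw [hμFdef]; ring
      have e2 : ∑ s ∈ Finset.Icc (-(nb:ℤ)+1) ((T:ℤ)-1),
            (max (∑ i : Fin nb, b i * μF (s + (i.val + 1 : ℤ))) 0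
              + max (-(∑ i : Fin nb, b i * μF (s + (i.val + 1 : ℤ)))) 0)
          = d * ∑ s ∈ Finset.Icc (-(nb:ℤ)+1) ((T:ℤ)-1),
              |∑ i : Fin nb, b i * μ (s + (i.val + 1 : ℤ))| := by
        rw [Finset.mul_sum]
        refine Finset.sum_congr rfl fun s _ => ?_
        rw [max_add_max, hβF s, abs_neg, abs_mul, abs_of_pos hd]
      have e3 : ∑ s ∈ Finset.Icc (-(na:ℤ)+1) (T:ℤ),
            (max (-(μF s + ∑ i : Fin na, a i * μF (s + (i.val + 1 : ℤ)))) 0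
              + max (μF s + ∑ i : Fin na, a i * μF (s + (i.val + 1 : ℤ))) 0)
          = d * ∑ s ∈ Finset.Icc (-(na:ℤ)+1) (T:ℤ),
              |μ s + ∑ i : Fin na, a i * μ (s + (i.val + 1 : ℤ))| := by
        rw [Finset.mul_sum]
        refine Finset.sum_congr rfl fun s _ => ?_
        rw [add_comm, max_add_max, hγF s, abs_neg, abs_mul, abs_of_pos hd]
      rw [e1, e2, e3]
      have hdW : d * W = 1 + |q| := by
        rw [hddef]; field_simp
      have habs : -q ≤ |q| := neg_le_abs q
      nlinarith [hdW, habs, hW, hd]
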